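/- arXiv:1601.06529 — 2 statements merged into one kernel-verified Lean document; each statement's English description precedes it below -/
import Mathlib

section
/- Let f be strictly convex with f' extending continuously to [0,∞), and define M(X) = max_{D ∈ S(H)} H_f(X,D) on the set S(H) of density operators. Then M(X) attains its maximal value over S(H) exactly at the rank-one projections: M(P) = max_{X∈S(H)} M(X) if and only if P is a rank-one projection. -/
open Matrix
open scoped ComplexOrder

/-- Standard operator function: apply `f : ℝ → ℝ` to a Hermitian matrix via its
spectral decomposition (junk value `0` for non-Hermitian input). -/
noncomputable def matFun {n : ℕ} (f : ℝ → ℝ) (A : Matrix (Fin n) (Fin n) ℂ) :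
    Matrix (Fin n) (Fin n) ℂ :=
  if hA : A.IsHermitian then
    (hA.eigenvectorUnitary : Matrix (Fin n) (Fin n) ℂ) *
      Matrix.diagonal (fun i => (f (hA.eigenvalues i) : ℂ)) *
      (star (hA.eigenvectorUnitary : Matrix (Fin n) (Fin n) ℂ))
  else 0

/-- Bregman `f`-divergence `H_f(A,B) = tr (f(A) - f(B) - f'(B)(A-B))`. -/
noncomputable def bregman {n : ℕ} (f : ℝ → ℝ) (A B : Matrix (Fin n) (Fin n) ℂ) : ℝ :=
  ((matFun f A - matFun f B - matFun (deriv f) B * (A - B)).trace).re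

/-- Jensen `f`-divergence `J_f(A,B) = tr (½(f(A)+f(B)) - f(½(A+B)))`. -/
noncomputable def jensen {n : ℕ} (f : ℝ → ℝ) (A B : Matrix (Fin n) (Fin n) ℂ) : ℝ :=
  (((1/2 : ℂ) • (matFun f A + matFun f B) - matFun f ((1/2 : ℂ) • (A + B))).trace).re

/-- `P` is a rank-one (orthogonal) projection. -/
def IsRankOneProj {n : ℕ} (P : Matrix (Fin n) (Fin n) ℂ) : Prop :=
  P.IsHermitian ∧ P * P = P ∧ P.rank = 1

/-- A density operator: positive semidefinite with unit trace. -/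
def IsDensity {n : ℕ} (A : Matrix (Fin n) (Fin n) ℂ) : Prop :=
  A.PosSemidef ∧ A.trace = 1

section Aux
variable {n : ℕ}

lemma exchange (M : Matrix (Fin n) (Fin n) ℂ) (a b : Fin n → ℝ) (g : ℝ → ℝ)
    (h : Matrix.diagonal (fun i => (a i : ℂ)) * M = M * Matrix.diagonal (fun i => (b i : ℂ))) :
    Matrix.diagonal (fun i => (g (a i) : ℂ)) * M = M * Matrix.diagonal (fun i => (g (b i) : ℂ)) := by
  ext i j
  have hij : (a i : ℂ) * M i j = M i j * (b j : ℂ) := by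
    have := congrFun (congrFun (congrArg (fun (Z : Matrix (Fin n) (Fin n) ℂ) => Z) h) i) j
    simpa [Matrix.diagonal_mul, Matrix.mul_diagonal] using this
  rcases eq_or_ne (M i j) 0 with h0 | h0
  · simp [Matrix.diagonal_mul, Matrix.mul_diagonal, h0]
  · have hab : a i = b j := by
      have h1 : (a i : ℂ) * M i j = (b j : ℂ) * M i j := by rw [hij, mul_comm]
      have := mul_right_cancel₀ h0 h1
      exact_mod_cast this
    simp [Matrix.diagonal_mul, Matrix.mul_diagonal, hab, mul_comm]

lemma herm_of_spectral {B V : Matrix (Fin n) (Fin n) ℂ}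
    (b : Fin n → ℝ)
    (hB : B = V * Matrix.diagonal (fun i => (b i : ℂ)) * star V) :
    B.IsHermitian := by
  rw [hB, Matrix.star_eq_conjTranspose]
  apply Matrix.isHermitian_mul_mul_conjTranspose
  rw [Matrix.isHermitian_diagonal_iff]
  intro i
  simp [_root_.IsSelfAdjoint, Complex.star_def, Complex.conj_ofReal]

lemma matFun_eq_of_spectral (g : ℝ → ℝ) {B V : Matrix (Fin n) (Fin n) ℂ}
    (hV : V ∈ Matrix.unitaryGroup (Fin n) ℂ) (b : Fin n → ℝ)
    (hB : B = V * Matrix.diagonal (fun i => (b i : ℂ)) * star V) :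
    matFun g B = V * Matrix.diagonal (fun i => (g (b i) : ℂ)) * star V := by
  have hherm : B.IsHermitian := herm_of_spectral b hB
  set W : Matrix (Fin n) (Fin n) ℂ := (hherm.eigenvectorUnitary : Matrix (Fin n) (Fin n) ℂ) with hW
  have hWmem : W ∈ Matrix.unitaryGroup (Fin n) ℂ := hherm.eigenvectorUnitary.2
  have hWW : star W * W = 1 := Matrix.UnitaryGroup.star_mul_self ⟨W, hWmem⟩
  have hWW' : W * star W = 1 := (Matrix.mem_unitaryGroup_iff).mp hWmem
  have hVV : star V * V = 1 := Matrix.UnitaryGroup.star_mul_self ⟨V, hV⟩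
  have hVV' : V * star V = 1 := (Matrix.mem_unitaryGroup_iff).mp hV
  have hspec : B = W * Matrix.diagonal (fun i => ((hherm.eigenvalues i : ℝ) : ℂ)) * star W := by
    have := hherm.spectral_theorem
    rw [Unitary.conjStarAlgAut_apply] at this
    exact this
  set e := hherm.eigenvalues
  set M := star W * V with hM
  have hkey : Matrix.diagonal (fun i => (e i : ℂ)) * M = M * Matrix.diagonal (fun i => (b i : ℂ)) := by
    have h1 : W * Matrix.diagonal (fun i => (e i : ℂ)) * star W
        = V * Matrix.diagonal (fun i => (b i : ℂ)) * star V := by rw [← hspec, ← hB]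
    calc Matrix.diagonal (fun i => (e i : ℂ)) * M
        = star W * (W * Matrix.diagonal (fun i => (e i : ℂ)) * star W) * V := by
          simp only [hM, Matrix.mul_assoc, ← Matrix.mul_assoc (star W) W, hWW, Matrix.one_mul]
      _ = star W * (V * Matrix.diagonal (fun i => (b i : ℂ)) * star V) * V := by rw [h1]
      _ = M * Matrix.diagonal (fun i => (b i : ℂ)) := by
          simp only [hM, Matrix.mul_assoc, hVV', Matrix.mul_one]
          rw [hVV, Matrix.mul_one]
  have hkey2 := exchange M e b g hkey
  have : matFun g B = W * Matrix.diagonal (fun i => (g (e i) : ℂ)) * star W := by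
    rw [matFun, dif_pos hherm]
  rw [this]
  calc W * Matrix.diagonal (fun i => (g (e i) : ℂ)) * star W
      = W * (Matrix.diagonal (fun i => (g (e i) : ℂ)) * M) * star V := by
        simp only [hM, Matrix.mul_assoc, hVV', Matrix.mul_one]
    _ = W * (M * Matrix.diagonal (fun i => (g (b i) : ℂ))) * star V := by rw [hkey2]
    _ = V * Matrix.diagonal (fun i => (g (b i) : ℂ)) * star V := by
        simp only [hM, ← Matrix.mul_assoc, hWW', Matrix.one_mul]

end Aux

section Aux2
variable {n : ℕ}

lemma trace_spectral_mul {V : Matrix (Fin n) (Fin n) ℂ}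
    (hV : V ∈ Matrix.unitaryGroup (Fin n) ℂ) (d : Fin n → ℂ) (C : Matrix (Fin n) (Fin n) ℂ) :
    (V * Matrix.diagonal d * star V * C).trace = ∑ j, d j * ((star V * C * V) j j) := by
  have h1 : (V * Matrix.diagonal d * star V * C).trace
      = (Matrix.diagonal d * (star V * C * V)).trace := by
    rw [Matrix.mul_assoc (V * Matrix.diagonal d) (star V) C,
      Matrix.trace_mul_comm (V * Matrix.diagonal d) (star V * C),
      ← Matrix.mul_assoc (star V * C) (V) (Matrix.diagonal d),
      Matrix.trace_mul_comm (star V * C * V) (Matrix.diagonal d)]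
  rw [h1, Matrix.trace]
  congr 1
  ext j
  simp [Matrix.diagonal_mul, Matrix.diag]

lemma trace_spectral {V : Matrix (Fin n) (Fin n) ℂ}
    (hV : V ∈ Matrix.unitaryGroup (Fin n) ℂ) (d : Fin n → ℂ) :
    (V * Matrix.diagonal d * star V).trace = ∑ j, d j := by
  have hVV : star V * V = 1 := Matrix.UnitaryGroup.star_mul_self ⟨V, hV⟩
  have := trace_spectral_mul hV d 1
  simpa [hVV] using this

lemma psd_diag_re_nonneg {M : Matrix (Fin n) (Fin n) ℂ} (hM : M.PosSemidef) (j : Fin n) :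
    0 ≤ (M j j).re ∧ (M j j).im = 0 := by
  have h := hM.dotProduct_mulVec_nonneg (Pi.single j 1)
  have hentry : star (Pi.single j 1 : Fin n → ℂ) ⬝ᵥ (M *ᵥ Pi.single j 1) = M j j := by
    simp [Matrix.mulVec_single, dotProduct, Pi.single_apply, Matrix.mulVec, apply_ite]
  rw [hentry] at h
  rw [Complex.le_def] at h
  simpa using ⟨h.1, h.2.symm⟩

end Aux2

section Aux3
variable {n : ℕ}

lemma spectral' {A : Matrix (Fin n) (Fin n) ℂ} (hA : A.IsHermitian) :
    A = (hA.eigenvectorUnitary : Matrix (Fin n) (Fin n) ℂ) *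
      Matrix.diagonal (fun i => ((hA.eigenvalues i : ℝ) : ℂ)) *
      (star (hA.eigenvectorUnitary : Matrix (Fin n) (Fin n) ℂ)) := by
  have := hA.spectral_theorem
  rw [Unitary.conjStarAlgAut_apply] at this
  exact this

lemma matFun_spectral {A : Matrix (Fin n) (Fin n) ℂ} (hA : A.IsHermitian) (g : ℝ → ℝ) :
    matFun g A = (hA.eigenvectorUnitary : Matrix (Fin n) (Fin n) ℂ) *
      Matrix.diagonal (fun i => ((g (hA.eigenvalues i) : ℝ) : ℂ)) *
      (star (hA.eigenvectorUnitary : Matrix (Fin n) (Fin n) ℂ)) :=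
  matFun_eq_of_spectral g hA.eigenvectorUnitary.2 hA.eigenvalues (spectral' hA)

lemma density_eig_sum {D : Matrix (Fin n) (Fin n) ℂ} (hD : IsDensity D) :
    ∑ j, hD.1.1.eigenvalues j = 1 := by
  have h1 : D.trace = ∑ j, ((hD.1.1.eigenvalues j : ℝ) : ℂ) := by
    conv_lhs => rw [spectral' hD.1.1]
    exact trace_spectral hD.1.1.eigenvectorUnitary.2 _
  have : ((∑ j, hD.1.1.eigenvalues j : ℝ) : ℂ) = 1 := by
    push_cast
    rw [← h1]
    exact hD.2
  exact_mod_cast this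

lemma density_eig_nonneg {D : Matrix (Fin n) (Fin n) ℂ} (hD : IsDensity D) (j : Fin n) :
    0 ≤ hD.1.1.eigenvalues j := hD.1.eigenvalues_nonneg j

lemma density_eig_le_one {D : Matrix (Fin n) (Fin n) ℂ} (hD : IsDensity D) (j : Fin n) :
    hD.1.1.eigenvalues j ≤ 1 := by
  have := density_eig_sum hD
  calc hD.1.1.eigenvalues j ≤ ∑ i, hD.1.1.eigenvalues i :=
        Finset.single_le_sum (fun i _ => density_eig_nonneg hD i) (Finset.mem_univ j)
    _ = 1 := this

lemma trace_matFun {A : Matrix (Fin n) (Fin n) ℂ} (hA : A.IsHermitian) (g : ℝ → ℝ) :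
    (matFun g A).trace = ∑ j, ((g (hA.eigenvalues j) : ℝ) : ℂ) := by
  rw [matFun_spectral hA g]
  exact trace_spectral hA.eigenvectorUnitary.2 _

end Aux3

section Aux4
variable {n : ℕ} (f : ℝ → ℝ)

lemma conj_diag {D : Matrix (Fin n) (Fin n) ℂ} (hD : D.IsHermitian) :
    star (hD.eigenvectorUnitary : Matrix (Fin n) (Fin n) ℂ) * D *
      (hD.eigenvectorUnitary : Matrix (Fin n) (Fin n) ℂ)
      = Matrix.diagonal (fun i => ((hD.eigenvalues i : ℝ) : ℂ)) := by
  set W : Matrix (Fin n) (Fin n) ℂ := (hD.eigenvectorUnitary : Matrix (Fin n) (Fin n) ℂ)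
  have hWW : star W * W = 1 := Matrix.UnitaryGroup.star_mul_self ⟨W, hD.eigenvectorUnitary.2⟩
  conv_lhs => rw [spectral' hD]
  simp only [Matrix.mul_assoc]
  rw [hWW, Matrix.mul_one, ← Matrix.mul_assoc (star W) W, hWW, Matrix.one_mul]

lemma bregman_eq {X D : Matrix (Fin n) (Fin n) ℂ} (hX : X.IsHermitian) (hD : D.IsHermitian) :
    bregman f X D = (∑ i, f (hX.eigenvalues i)) - (∑ j, f (hD.eigenvalues j))
      - ∑ j, deriv f (hD.eigenvalues j) *
          (((star (hD.eigenvectorUnitary : Matrix (Fin n) (Fin n) ℂ) * X *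
              (hD.eigenvectorUnitary : Matrix (Fin n) (Fin n) ℂ)) j j).re - hD.eigenvalues j) := by
  set W : Matrix (Fin n) (Fin n) ℂ := (hD.eigenvectorUnitary : Matrix (Fin n) (Fin n) ℂ) with hW
  have h3 : (matFun (deriv f) D * (X - D)).trace
      = ∑ j, ((deriv f (hD.eigenvalues j) : ℝ) : ℂ) * ((star W * (X - D) * W) j j) := by
    rw [matFun_spectral hD (deriv f)]
    exact trace_spectral_mul hD.eigenvectorUnitary.2 _ _
  have h4 : ∀ j, (star W * (X - D) * W) j j
      = (star W * X * W) j j - ((hD.eigenvalues j : ℝ) : ℂ) := by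
    intro j
    have : star W * (X - D) * W = star W * X * W - star W * D * W := by
      noncomm_ring
    rw [this, conj_diag hD]
    simp [Matrix.sub_apply]
  rw [bregman, Matrix.trace_sub, Matrix.trace_sub, trace_matFun hX f, trace_matFun hD f, h3]
  simp only [h4]
  have e1 : (∑ j : Fin n, ((f (hX.eigenvalues j) : ℝ) : ℂ)).re = ∑ i, f (hX.eigenvalues i) := by
    rw [Complex.re_sum]; simp
  have e2 : (∑ j : Fin n, ((f (hD.eigenvalues j) : ℝ) : ℂ)).re = ∑ j, f (hD.eigenvalues j) := by
    rw [Complex.re_sum]; simp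
  have e3 : (∑ x : Fin n, ((deriv f (hD.eigenvalues x) : ℝ) : ℂ) *
      ((star W * X * W) x x - ((hD.eigenvalues x : ℝ) : ℂ))).re
      = ∑ j, deriv f (hD.eigenvalues j) * (((star W * X * W) j j).re - hD.eigenvalues j) := by
    rw [Complex.re_sum]
    apply Finset.sum_congr rfl
    intro j _
    simp [Complex.mul_re, Complex.sub_re, Complex.sub_im]
  rw [Complex.sub_re, Complex.sub_re, e1, e2, e3]
end Aux4

section Convexity
variable {f : ℝ → ℝ}

lemma superadd_strict (hconv : StrictConvexOn ℝ (Set.Ici 0) f) {a b : ℝ}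
    (ha : 0 < a) (hb : 0 < b) : f a + f b < f (a + b) + f 0 := by
  have hspos : 0 < a + b := by positivity
  have hfr : b / (a + b) + a / (a + b) = 1 := by
    rw [← add_div, add_comm b a, div_self hspos.ne']
  have hfr' : a / (a + b) + b / (a + b) = 1 := by
    rw [← add_div, div_self hspos.ne']
  have key := hconv.2 (Set.mem_Ici.mpr le_rfl) (Set.mem_Ici.mpr hspos.le) (ne_of_lt hspos)
    (by positivity : (0:ℝ) < b / (a + b)) (by positivity : (0:ℝ) < a / (a + b)) hfr
  have e : (b / (a + b)) • (0:ℝ) + (a / (a + b)) • (a + b) = a := by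
    rw [smul_eq_mul, smul_eq_mul, mul_zero, zero_add, div_mul_eq_mul_div,
      mul_div_assoc, div_self hspos.ne', mul_one]
  rw [e] at key
  have key2 := hconv.2 (Set.mem_Ici.mpr le_rfl) (Set.mem_Ici.mpr hspos.le) (ne_of_lt hspos)
    (by positivity : (0:ℝ) < a / (a + b)) (by positivity : (0:ℝ) < b / (a + b)) hfr'
  have e2 : (a / (a + b)) • (0:ℝ) + (b / (a + b)) • (a + b) = b := by
    rw [smul_eq_mul, smul_eq_mul, mul_zero, zero_add, div_mul_eq_mul_div,
      mul_div_assoc, div_self hspos.ne', mul_one]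
  rw [e2] at key2
  simp only [smul_eq_mul] at key key2
  have sum1 : b / (a + b) * f 0 + a / (a + b) * f 0 = f 0 := by rw [← add_mul, hfr, one_mul]
  have sum2 : a / (a + b) * f (a + b) + b / (a + b) * f (a + b) = f (a + b) := by
    rw [← add_mul, hfr', one_mul]
  linarith

lemma superadd (hconv : StrictConvexOn ℝ (Set.Ici 0) f) {a b : ℝ}
    (ha : 0 ≤ a) (hb : 0 ≤ b) : f a + f b ≤ f (a + b) + f 0 := by
  rcases eq_or_lt_of_le ha with h | h
  · simp [← h, add_comm]
  rcases eq_or_lt_of_le hb with h' | h'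
  · simp [← h']
  exact (superadd_strict hconv h h').le

lemma sum_h_le {n : ℕ} (hconv : StrictConvexOn ℝ (Set.Ici 0) f) (l : Fin n → ℝ)
    (hl : ∀ i, 0 ≤ l i) (s : Finset (Fin n)) :
    ∑ i ∈ s, (f (l i) - f 0) ≤ f (∑ i ∈ s, l i) - f 0 := by
  induction s using Finset.cons_induction with
  | empty => simp
  | cons a s ha ih =>
    rw [Finset.sum_cons, Finset.sum_cons]
    have hsum : 0 ≤ ∑ i ∈ s, l i := Finset.sum_nonneg fun i _ => hl i
    have := superadd hconv (hl a) hsum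
    linarith

lemma sum_f_le_simplex {n : ℕ} (hconv : StrictConvexOn ℝ (Set.Ici 0) f) (l : Fin n → ℝ)
    (hl : ∀ i, 0 ≤ l i) (hsum : ∑ i, l i = 1) :
    ∑ i, f (l i) ≤ f 1 + ((n : ℝ) - 1) * f 0 := by
  have := sum_h_le hconv l hl Finset.univ
  rw [hsum, Finset.sum_sub_distrib, Finset.sum_const, Finset.card_univ, Fintype.card_fin,
    nsmul_eq_mul] at this
  linarith

lemma sum_f_lt_simplex {n : ℕ} (hconv : StrictConvexOn ℝ (Set.Ici 0) f) (l : Fin n → ℝ)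
    (hl : ∀ i, 0 ≤ l i) (hsum : ∑ i, l i = 1) {i j : Fin n} (hij : i ≠ j)
    (hi : 0 < l i) (hj : 0 < l j) :
    ∑ i, f (l i) < f 1 + ((n : ℝ) - 1) * f 0 := by
  classical
  set g : Fin n → ℝ := fun k => f (l k) - f 0 with hg
  set s : Finset (Fin n) := (Finset.univ.erase i).erase j with hs
  have hjmem : j ∈ Finset.univ.erase i := Finset.mem_erase.mpr ⟨hij.symm, Finset.mem_univ j⟩
  have hdec : ∀ (u : Fin n → ℝ), ∑ k, u k = u i + (u j + ∑ k ∈ s, u k) := by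
    intro u
    rw [← Finset.add_sum_erase _ u (Finset.mem_univ i), ← Finset.add_sum_erase _ u hjmem]
  have hlsum : l i + (l j + ∑ k ∈ s, l k) = 1 := by rw [← hdec l, hsum]
  have hrest : 0 ≤ ∑ k ∈ s, l k := Finset.sum_nonneg fun k _ => hl k
  have h1 : g i + g j < f (l i + l j) - f 0 := by
    have := superadd_strict hconv hi hj
    simp only [hg]
    linarith
  have h2 : ∑ k ∈ s, g k ≤ f (∑ k ∈ s, l k) - f 0 := sum_h_le hconv l hl s
  have h3 : f (l i + l j) + f (∑ k ∈ s, l k) ≤ f 1 + f 0 := by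
    have := superadd hconv (by positivity : (0:ℝ) ≤ l i + l j) hrest
    rw [show l i + l j + ∑ k ∈ s, l k = 1 by linarith] at this
    linarith
  calc ∑ k, f (l k) = (∑ k, g k) + (n : ℝ) * f 0 := by
        simp only [hg, Finset.sum_sub_distrib, Finset.sum_const, Finset.card_univ,
          Fintype.card_fin, nsmul_eq_mul]
        ring
    _ < (f (l i + l j) - f 0 + (f (∑ k ∈ s, l k) - f 0)) + (n : ℝ) * f 0 := by
        have : ∑ k, g k = g i + (g j + ∑ k ∈ s, g k) := hdec g
        rw [this]
        linarith
    _ ≤ f 1 + ((n : ℝ) - 1) * f 0 := by linarith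

lemma simplex_vertex_of_ge {n : ℕ} (hconv : StrictConvexOn ℝ (Set.Ici 0) f) (l : Fin n → ℝ)
    (hl : ∀ i, 0 ≤ l i) (hsum : ∑ i, l i = 1)
    (hge : f 1 + ((n : ℝ) - 1) * f 0 ≤ ∑ i, f (l i)) :
    ∃ i₀, l i₀ = 1 ∧ ∀ j, j ≠ i₀ → l j = 0 := by
  classical
  have hno2 : ∀ i j, i ≠ j → ¬(0 < l i ∧ 0 < l j) := by
    intro i j hij ⟨hi, hj⟩
    exact absurd hge (not_le.mpr (sum_f_lt_simplex hconv l hl hsum hij hi hj))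
  have hex : ∃ i₀, 0 < l i₀ := by
    by_contra h
    push_neg at h
    have : ∀ i, l i = 0 := fun i => le_antisymm (h i) (hl i)
    simp [this] at hsum
  obtain ⟨i₀, hi₀⟩ := hex
  have hz : ∀ j, j ≠ i₀ → l j = 0 := by
    intro j hj
    by_contra hne
    exact hno2 i₀ j (Ne.symm hj) ⟨hi₀, lt_of_le_of_ne (hl j) (Ne.symm hne)⟩
  refine ⟨i₀, ?_, hz⟩
  have : ∑ i, l i = l i₀ := by
    rw [← Finset.add_sum_erase _ l (Finset.mem_univ i₀)]
    rw [Finset.sum_eq_zero (fun j hjmem => hz j (Finset.mem_erase.mp hjmem).1)]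
    ring
  rw [this] at hsum
  exact hsum

end Convexity

section Proj
variable {n : ℕ}

lemma eig_mem_01 {P : Matrix (Fin n) (Fin n) ℂ} (hP : P.IsHermitian) (hidem : P * P = P)
    (i : Fin n) : hP.eigenvalues i = 0 ∨ hP.eigenvalues i = 1 := by
  set v : Fin n → ℂ := ⇑(hP.eigenvectorBasis i) with hv
  have hvne : v ≠ 0 := by
    intro h
    apply hP.eigenvectorBasis.orthonormal.ne_zero i
    ext j
    exact congrFun h j
  have h1 : P *ᵥ v = hP.eigenvalues i • v := hP.mulVec_eigenvectorBasis i
  have h2 : P *ᵥ (P *ᵥ v) = hP.eigenvalues i • (hP.eigenvalues i • v) := by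
    rw [h1, Matrix.mulVec_smul, h1]
  rw [Matrix.mulVec_mulVec, hidem, h1, smul_smul] at h2
  have h3 : (hP.eigenvalues i * hP.eigenvalues i - hP.eigenvalues i) • v = 0 := by
    rw [sub_smul, h2, sub_self]
  rcases smul_eq_zero.mp h3 with h | h
  · have hfac : hP.eigenvalues i * (hP.eigenvalues i - 1) = 0 := by linear_combination h
    rcases mul_eq_zero.mp hfac with h' | h'
    · exact Or.inl h'
    · exact Or.inr (by linarith)
  · exact absurd h hvne

lemma trace_eq_sum_eig {P : Matrix (Fin n) (Fin n) ℂ} (hP : P.IsHermitian) :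
    P.trace = ∑ j, ((hP.eigenvalues j : ℝ) : ℂ) := by
  conv_lhs => rw [spectral' hP]
  exact trace_spectral hP.eigenvectorUnitary.2 _

lemma idem_of_eig01 {P : Matrix (Fin n) (Fin n) ℂ} (hP : P.IsHermitian)
    (h01 : ∀ i, hP.eigenvalues i = 0 ∨ hP.eigenvalues i = 1) : P * P = P := by
  obtain ⟨V, d, hVmem, hd01, hPeq⟩ :
      ∃ (V : Matrix (Fin n) (Fin n) ℂ) (d : Fin n → ℝ),
        V ∈ Matrix.unitaryGroup (Fin n) ℂ ∧ (∀ i, d i = 0 ∨ d i = 1) ∧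
          P = V * Matrix.diagonal (fun i => ((d i : ℝ) : ℂ)) * star V :=
    ⟨_, _, hP.eigenvectorUnitary.2, h01, spectral' hP⟩
  have hVV : star V * V = 1 := Matrix.UnitaryGroup.star_mul_self ⟨V, hVmem⟩
  have hdd : Matrix.diagonal (fun i => ((d i : ℝ) : ℂ)) * Matrix.diagonal (fun i => ((d i : ℝ) : ℂ))
      = Matrix.diagonal (fun i => ((d i : ℝ) : ℂ)) := by
    rw [Matrix.diagonal_mul_diagonal]
    ext i j
    by_cases hij : i = j
    · subst hij
      rcases hd01 i with h | h <;> simp [Matrix.diagonal_apply_eq, h]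
    · simp [Matrix.diagonal_apply_ne _ hij]
  rw [hPeq]
  calc V * Matrix.diagonal (fun i => ((d i : ℝ) : ℂ)) * star V *
        (V * Matrix.diagonal (fun i => ((d i : ℝ) : ℂ)) * star V)
      = V * (Matrix.diagonal (fun i => ((d i : ℝ) : ℂ)) *
          ((star V * V) * Matrix.diagonal (fun i => ((d i : ℝ) : ℂ)))) * star V := by
        simp only [Matrix.mul_assoc]
    _ = V * Matrix.diagonal (fun i => ((d i : ℝ) : ℂ)) * star V := by
        rw [hVV, Matrix.one_mul, hdd, Matrix.mul_assoc]

lemma rankOne_of_density_idem {P : Matrix (Fin n) (Fin n) ℂ} (hP : IsDensity P)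
    (hidem : P * P = P) : IsRankOneProj P := by
  classical
  have hH : P.IsHermitian := hP.1.1
  have h01 := fun i => eig_mem_01 hH hidem i
  have hsum : ∑ i, hH.eigenvalues i = 1 := density_eig_sum hP
  have hcardsum : ∑ i, hH.eigenvalues i
      = ((Finset.univ.filter (fun i => hH.eigenvalues i ≠ 0)).card : ℝ) := by
    rw [Finset.card_filter]
    push_cast
    apply Finset.sum_congr rfl
    intro i _
    rcases h01 i with h | h <;> simp [h]
  have hcard : (Finset.univ.filter (fun i => hH.eigenvalues i ≠ 0)).card = 1 := by
    have : ((Finset.univ.filter (fun i => hH.eigenvalues i ≠ 0)).card : ℝ) = 1 := by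
      rw [← hcardsum, hsum]
    exact_mod_cast this
  refine ⟨hH, hidem, ?_⟩
  rw [hH.rank_eq_card_non_zero_eigs, Fintype.card_subtype]
  exact hcard

lemma density_of_rankOne {P : Matrix (Fin n) (Fin n) ℂ} (hR : IsRankOneProj P) :
    IsDensity P := by
  classical
  obtain ⟨hH, hidem, hrank⟩ := hR
  have hpsd : P.PosSemidef := by
    have := Matrix.posSemidef_conjTranspose_mul_self P
    rwa [hH.eq, hidem] at this
  have h01 := fun i => eig_mem_01 hH hidem i
  have hcard : (Finset.univ.filter (fun i => hH.eigenvalues i ≠ 0)).card = 1 := by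
    rw [hH.rank_eq_card_non_zero_eigs, Fintype.card_subtype] at hrank
    exact hrank
  have hsum : ∑ i, hH.eigenvalues i = 1 := by
    have : ∑ i, hH.eigenvalues i
        = ((Finset.univ.filter (fun i => hH.eigenvalues i ≠ 0)).card : ℝ) := by
      rw [Finset.card_filter]
      push_cast
      apply Finset.sum_congr rfl
      intro i _
      rcases h01 i with h | h <;> simp [h]
    rw [this, hcard]
    norm_num
  refine ⟨hpsd, ?_⟩
  rw [trace_eq_sum_eig hH]
  rw [show (1 : ℂ) = ((1:ℝ) : ℂ) by norm_num, ← hsum]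
  push_cast
  rfl

end Proj

section Aux7
variable {n : ℕ} (f : ℝ → ℝ)

lemma conj_diag' {V : Matrix (Fin n) (Fin n) ℂ} (hV : V ∈ Matrix.unitaryGroup (Fin n) ℂ)
    (d : Fin n → ℂ) :
    star V * (V * Matrix.diagonal d * star V) * V = Matrix.diagonal d := by
  have hVV : star V * V = 1 := Matrix.UnitaryGroup.star_mul_self ⟨V, hV⟩
  calc star V * (V * Matrix.diagonal d * star V) * V
      = (star V * V) * Matrix.diagonal d * (star V * V) := by simp only [Matrix.mul_assoc]
    _ = Matrix.diagonal d := by rw [hVV, Matrix.one_mul, Matrix.mul_one]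

lemma bregman_same_basis {V : Matrix (Fin n) (Fin n) ℂ}
    (hV : V ∈ Matrix.unitaryGroup (Fin n) ℂ) (e v : Fin n → ℝ)
    {A B : Matrix (Fin n) (Fin n) ℂ}
    (hA : A = V * Matrix.diagonal (fun i => ((e i : ℝ) : ℂ)) * star V)
    (hB : B = V * Matrix.diagonal (fun i => ((v i : ℝ) : ℂ)) * star V) :
    bregman f A B = ∑ i, (f (e i) - f (v i) - deriv f (v i) * (e i - v i)) := by
  have hmA := matFun_eq_of_spectral f hV e hA
  have hmB := matFun_eq_of_spectral f hV v hB
  have hmB' := matFun_eq_of_spectral (deriv f) hV v hB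
  have hAB : star V * (A - B) * V
      = Matrix.diagonal (fun i => ((e i : ℝ) : ℂ)) - Matrix.diagonal (fun i => ((v i : ℝ) : ℂ)) := by
    have : star V * (A - B) * V = star V * A * V - star V * B * V := by noncomm_ring
    rw [this, hA, hB, conj_diag' hV, conj_diag' hV]
  have h3 : (matFun (deriv f) B * (A - B)).trace
      = ∑ j, ((deriv f (v j) : ℝ) : ℂ) * (((e j : ℝ) : ℂ) - ((v j : ℝ) : ℂ)) := by
    rw [hmB']
    rw [trace_spectral_mul hV _ (A - B)]
    apply Finset.sum_congr rfl
    intro j _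
    rw [hAB]
    simp [Matrix.sub_apply]
  rw [bregman, Matrix.trace_sub, Matrix.trace_sub, h3, hmA, hmB,
    trace_spectral hV _, trace_spectral hV _]
  simp only [Complex.sub_re, Complex.re_sum, Complex.mul_re, Complex.sub_im, Complex.ofReal_re,
    Complex.ofReal_im, Complex.sub_re]
  simp [Finset.sum_sub_distrib]

lemma xfacts {X : Matrix (Fin n) (Fin n) ℂ} (hX : IsDensity X)
    {W : Matrix (Fin n) (Fin n) ℂ} (hW : W ∈ Matrix.unitaryGroup (Fin n) ℂ) :
    (∀ j, 0 ≤ ((star W * X * W) j j).re) ∧ (∑ j, ((star W * X * W) j j).re) = 1 := by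
  have hpsd : (star W * X * W).PosSemidef := by
    rw [Matrix.star_eq_conjTranspose]
    exact hX.1.conjTranspose_mul_mul_same W
  constructor
  · exact fun j => (psd_diag_re_nonneg hpsd j).1
  · have htr : (star W * X * W).trace = X.trace := by
      rw [Matrix.trace_mul_cycle, (Matrix.mem_unitaryGroup_iff).mp hW, Matrix.one_mul]
    have : (star W * X * W).trace = 1 := by rw [htr, hX.2]
    have := congrArg Complex.re this
    rw [Matrix.trace] at this
    simpa [Complex.re_sum, Matrix.diag] using this

end Aux7

section Aux8
variable {n : ℕ}

lemma vertex_of_rankOne {Q : Matrix (Fin n) (Fin n) ℂ} (hQ : IsRankOneProj Q) :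
    ∃ i₀, hQ.1.eigenvalues i₀ = 1 ∧ ∀ j, j ≠ i₀ → hQ.1.eigenvalues j = 0 := by
  classical
  have hQd : IsDensity Q := density_of_rankOne hQ
  have h01 := fun i => eig_mem_01 hQ.1 hQ.2.1 i
  have hsum : ∑ i, hQ.1.eigenvalues i = 1 := density_eig_sum hQd
  have hex : ∃ i₀, hQ.1.eigenvalues i₀ = 1 := by
    by_contra h
    push_neg at h
    have hz : ∀ i, hQ.1.eigenvalues i = 0 := by
      intro i
      rcases h01 i with h' | h'
      · exact h'
      · exact absurd h' (h i)
    rw [Finset.sum_eq_zero (fun i _ => hz i)] at hsum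
    norm_num at hsum
  obtain ⟨i₀, hi₀⟩ := hex
  refine ⟨i₀, hi₀, ?_⟩
  have hrest : ∑ j ∈ Finset.univ.erase i₀, hQ.1.eigenvalues j = 0 := by
    have := Finset.add_sum_erase Finset.univ hQ.1.eigenvalues (Finset.mem_univ i₀)
    rw [← this, hi₀] at hsum
    linarith
  intro j hj
  have hnn : ∀ i ∈ Finset.univ.erase i₀, 0 ≤ hQ.1.eigenvalues i := by
    intro i _
    rcases h01 i with h' | h' <;> simp [h']
  exact (Finset.sum_eq_zero_iff_of_nonneg hnn).mp hrest j
    (Finset.mem_erase.mpr ⟨hj, Finset.mem_univ j⟩)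

lemma sum_f_vertex (f : ℝ → ℝ) (e : Fin n → ℝ) (i₀ : Fin n) (h1 : e i₀ = 1)
    (h0 : ∀ j, j ≠ i₀ → e j = 0) (hn : 1 ≤ n) :
    ∑ i, f (e i) = f 1 + ((n : ℝ) - 1) * f 0 := by
  classical
  rw [← Finset.add_sum_erase Finset.univ (fun i => f (e i)) (Finset.mem_univ i₀), h1]
  congr 1
  rw [Finset.sum_congr rfl (fun j hj => by
    rw [h0 j (Finset.mem_erase.mp hj).1]), Finset.sum_const]
  rw [Finset.card_erase_of_mem (Finset.mem_univ i₀), Finset.card_univ, Fintype.card_fin,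
    nsmul_eq_mul, Nat.cast_sub hn]
  norm_num

end Aux8

/-- `M(X) = max_D H_f(X,D)` attains its maximum over the state
space exactly at the rank-one projections. -/
theorem bregman_maxFun_maximal_iff_pure {n : ℕ} (hn : 2 ≤ n) (f : ℝ → ℝ)
    (hconv : StrictConvexOn ℝ (Set.Ici 0) f)
    (hdiff : ∀ x ∈ Set.Ici (0 : ℝ), DifferentiableAt ℝ f x)
    (hcont : ContinuousOn (deriv f) (Set.Ici 0)) :
    ∀ P : Matrix (Fin n) (Fin n) ℂ, IsDensity P →
      (sSup ((fun D => bregman f P D) '' ({D | IsDensity D} : Set (Matrix (Fin n) (Fin n) ℂ))) =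
          sSup ((fun X => sSup ((fun D => bregman f X D) '' ({D | IsDensity D} : Set (Matrix (Fin n) (Fin n) ℂ)))) ''
            ({X | IsDensity X} : Set (Matrix (Fin n) (Fin n) ℂ))) ↔
        IsRankOneProj P) := by
  classical
  intro P hP
  have hn1 : 1 ≤ n := le_trans (by norm_num) hn
  have hfc : ContinuousOn f (Set.Icc (0:ℝ) 1) := fun x hx =>
    ((hdiff x (Set.mem_of_mem_of_subset hx Set.Icc_subset_Ici_self)).continuousAt).continuousWithinAt
  obtain ⟨Cf, hCf⟩ := IsCompact.exists_bound_of_continuousOn isCompact_Icc hfc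
  obtain ⟨Cg, hCg⟩ := IsCompact.exists_bound_of_continuousOn isCompact_Icc
    (hcont.mono Set.Icc_subset_Ici_self)
  have hCf' : ∀ y ∈ Set.Icc (0:ℝ) 1, |f y| ≤ Cf := by
    intro y hy; simpa [Real.norm_eq_abs] using hCf y hy
  have hCg' : ∀ y ∈ Set.Icc (0:ℝ) 1, |deriv f y| ≤ Cg := by
    intro y hy; simpa [Real.norm_eq_abs] using hCg y hy
  have hCgpos : 0 ≤ Cg := le_trans (abs_nonneg _) (hCg' 0 (by norm_num))
  set K : ℝ := n * Cf + n * Cf + n * Cg with hK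
  have heigmem : ∀ (D : Matrix (Fin n) (Fin n) ℂ) (hD : IsDensity D) (j : Fin n),
      hD.1.1.eigenvalues j ∈ Set.Icc (0:ℝ) 1 := fun D hD j =>
    ⟨density_eig_nonneg hD j, density_eig_le_one hD j⟩
  -- global bound on the Bregman divergence over densities
  have hglob : ∀ X D : Matrix (Fin n) (Fin n) ℂ, IsDensity X → IsDensity D →
      bregman f X D ≤ K := by
    intro X D hX hD
    rw [bregman_eq f hX.1.1 hD.1.1]
    have hxf := xfacts hX hD.1.1.eigenvectorUnitary.2
    set W : Matrix (Fin n) (Fin n) ℂ := (hD.1.1.eigenvectorUnitary : Matrix (Fin n) (Fin n) ℂ)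
    set x : Fin n → ℝ := fun j => ((star W * X * W) j j).re with hx
    set μ : Fin n → ℝ := hD.1.1.eigenvalues with hμ
    have hx1 : ∀ j, x j ≤ 1 := by
      intro j
      calc x j ≤ ∑ i, x i := Finset.single_le_sum (fun i _ => hxf.1 i) (Finset.mem_univ j)
        _ = 1 := hxf.2
    have bA : ∑ i, f (hX.1.1.eigenvalues i) ≤ (n : ℝ) * Cf := by
      calc ∑ i, f (hX.1.1.eigenvalues i) ≤ ∑ _i : Fin n, Cf :=
            Finset.sum_le_sum (fun i _ => le_trans (le_abs_self _) (hCf' _ (heigmem X hX i)))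
        _ = (n : ℝ) * Cf := by simp [Finset.sum_const, mul_comm]
    have bB : -(∑ j, f (μ j)) ≤ (n : ℝ) * Cf := by
      calc -(∑ j, f (μ j)) = ∑ j, -(f (μ j)) := by rw [Finset.sum_neg_distrib]
        _ ≤ ∑ _j : Fin n, Cf :=
            Finset.sum_le_sum (fun j _ => le_trans (neg_le_abs _) (hCf' _ (heigmem D hD j)))
        _ = (n : ℝ) * Cf := by simp [Finset.sum_const, mul_comm]
    have bC : -(∑ j, deriv f (μ j) * (x j - μ j)) ≤ (n : ℝ) * Cg := by
      have habs : ∀ j, |deriv f (μ j) * (x j - μ j)| ≤ Cg := by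
        intro j
        rw [abs_mul]
        have h1 : |deriv f (μ j)| ≤ Cg := hCg' _ (heigmem D hD j)
        have h2 : |x j - μ j| ≤ 1 := by
          have := hxf.1 j
          have := hx1 j
          have := (heigmem D hD j).1
          have := (heigmem D hD j).2
          rw [abs_sub_le_iff]
          constructor <;> linarith
        calc |deriv f (μ j)| * |x j - μ j| ≤ Cg * 1 :=
              mul_le_mul h1 h2 (abs_nonneg _) hCgpos
          _ = Cg := mul_one Cg
      calc -(∑ j, deriv f (μ j) * (x j - μ j)) = ∑ j, -(deriv f (μ j) * (x j - μ j)) := by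
            rw [Finset.sum_neg_distrib]
        _ ≤ ∑ _j : Fin n, Cg :=
            Finset.sum_le_sum (fun j _ => le_trans (neg_le_abs _) (habs j))
        _ = (n : ℝ) * Cg := by simp [Finset.sum_const, mul_comm]
    rw [hK]
    linarith
  -- abbreviations
  set SS : Matrix (Fin n) (Fin n) ℂ → ℝ :=
    fun X => sSup ((fun D => bregman f X D) ''
      ({D | IsDensity D} : Set (Matrix (Fin n) (Fin n) ℂ))) with hSS
  show SS P = sSup (SS '' {X | IsDensity X}) ↔ IsRankOneProj P
  have hSne : ∀ X : Matrix (Fin n) (Fin n) ℂ,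
      ((fun D => bregman f X D) '' {D | IsDensity D}).Nonempty :=
    fun X => ⟨bregman f X P, ⟨P, hP, rfl⟩⟩
  have hSbdd : ∀ X : Matrix (Fin n) (Fin n) ℂ, IsDensity X →
      BddAbove ((fun D => bregman f X D) '' {D | IsDensity D}) := by
    intro X hX
    refine ⟨K, ?_⟩
    rintro y ⟨D, hD, rfl⟩
    exact hglob X D hX hD
  have hSSleK : ∀ X, IsDensity X → SS X ≤ K := by
    intro X hX
    apply csSup_le (hSne X)
    rintro y ⟨D, hD, rfl⟩
    exact hglob X D hX hD
  have hOne : (SS '' {X | IsDensity X}).Nonempty := ⟨SS P, ⟨P, hP, rfl⟩⟩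
  have hObdd : BddAbove (SS '' {X | IsDensity X}) := by
    refine ⟨K, ?_⟩
    rintro y ⟨X, hX, rfl⟩
    exact hSSleK X hX
  -- key comparison lemma
  have keyA : ∀ Q : Matrix (Fin n) (Fin n) ℂ, IsRankOneProj Q →
      ∀ (X D : Matrix (Fin n) (Fin n) ℂ) (hX : IsDensity X) (hD : IsDensity D),
      bregman f X D ≤ (∑ i, f (hX.1.1.eigenvalues i)) - (f 1 + ((n : ℝ) - 1) * f 0) + SS Q := by
    intro Q hQ X D hX hD
    obtain ⟨i₀, hi₀, hi₀'⟩ := vertex_of_rankOne hQ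
    have hQd : IsDensity Q := density_of_rankOne hQ
    have hbe := bregman_eq f hX.1.1 hD.1.1
    have hxf := xfacts hX hD.1.1.eigenvectorUnitary.2
    set W : Matrix (Fin n) (Fin n) ℂ := (hD.1.1.eigenvectorUnitary : Matrix (Fin n) (Fin n) ℂ)
    set x : Fin n → ℝ := fun j => ((star W * X * W) j j).re with hx
    set μ : Fin n → ℝ := hD.1.1.eigenvalues with hμ
    obtain ⟨k, -, hk⟩ := Finset.exists_min_image Finset.univ (fun j => deriv f (μ j))
      ⟨i₀, Finset.mem_univ i₀⟩
    have hsumlb : deriv f (μ k) ≤ ∑ j, deriv f (μ j) * x j := by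
      calc deriv f (μ k) = ∑ j, deriv f (μ k) * x j := by
            rw [← Finset.mul_sum, hxf.2, mul_one]
        _ ≤ ∑ j, deriv f (μ j) * x j :=
            Finset.sum_le_sum (fun j _ => mul_le_mul_of_nonneg_right
              (hk j (Finset.mem_univ j)) (hxf.1 j))
    set ν : Fin n → ℝ := fun i => μ (Equiv.swap i₀ k i) with hν
    set WQ : Matrix (Fin n) (Fin n) ℂ := (hQ.1.eigenvectorUnitary : Matrix (Fin n) (Fin n) ℂ)
      with hWQ
    set D2 : Matrix (Fin n) (Fin n) ℂ :=
      WQ * Matrix.diagonal (fun i => ((ν i : ℝ) : ℂ)) * star WQ with hD2def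
    have hνsum : ∑ i, ν i = 1 := by
      rw [hν]
      rw [Equiv.sum_comp (Equiv.swap i₀ k) μ]
      exact density_eig_sum hD
    have hD2 : IsDensity D2 := by
      constructor
      · have hdiagpsd : (Matrix.diagonal (fun i => ((ν i : ℝ) : ℂ))).PosSemidef := by
          rw [Matrix.posSemidef_diagonal_iff]
          intro i
          rw [Complex.zero_le_real]
          exact density_eig_nonneg hD _
        have := hdiagpsd.mul_mul_conjTranspose_same WQ
        rwa [← Matrix.star_eq_conjTranspose] at this
      · rw [hD2def, trace_spectral hQ.1.eigenvectorUnitary.2]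
        have : ((∑ i, ν i : ℝ) : ℂ) = 1 := by rw [hνsum]; norm_num
        rw [← this]
        push_cast
        rfl
    have hbsb := bregman_same_basis f hQ.1.eigenvectorUnitary.2 hQ.1.eigenvalues ν
      (spectral' hQ.1) hD2def
    have hsum1 : ∑ i, f (hQ.1.eigenvalues i) = f 1 + ((n : ℝ) - 1) * f 0 :=
      sum_f_vertex f _ i₀ hi₀ hi₀' hn1
    have hsum2 : ∑ i, f (ν i) = ∑ j, f (μ j) :=
      Equiv.sum_comp (Equiv.swap i₀ k) (fun j => f (μ j))
    have hsum3 : ∑ i, deriv f (ν i) * hQ.1.eigenvalues i = deriv f (μ k) := by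
      rw [Finset.sum_eq_single i₀]
      · rw [hi₀, mul_one, hν]
        simp [Equiv.swap_apply_left]
      · intro j _ hj
        rw [hi₀' j hj, mul_zero]
      · intro h
        exact absurd (Finset.mem_univ i₀) h
    have hsum4 : ∑ i, deriv f (ν i) * ν i = ∑ j, deriv f (μ j) * μ j :=
      Equiv.sum_comp (Equiv.swap i₀ k) (fun j => deriv f (μ j) * μ j)
    have hQval : bregman f Q D2 = (f 1 + ((n : ℝ) - 1) * f 0) - (∑ j, f (μ j))
        - deriv f (μ k) + ∑ j, deriv f (μ j) * μ j := by
      rw [hbsb]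
      have hexp : ∀ i, f (hQ.1.eigenvalues i) - f (ν i)
          - deriv f (ν i) * (hQ.1.eigenvalues i - ν i)
          = f (hQ.1.eigenvalues i) - f (ν i)
            - (deriv f (ν i) * hQ.1.eigenvalues i - deriv f (ν i) * ν i) := by
        intro i; ring
      rw [Finset.sum_congr rfl (fun i _ => hexp i)]
      rw [Finset.sum_sub_distrib, Finset.sum_sub_distrib, Finset.sum_sub_distrib,
        hsum1, hsum2, hsum3, hsum4]
      ring
    have hQle : bregman f Q D2 ≤ SS Q := le_csSup (hSbdd Q hQd) ⟨D2, hD2, rfl⟩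
    rw [hbe]
    have hexp2 : ∑ j, deriv f (μ j) * (x j - μ j)
        = (∑ j, deriv f (μ j) * x j) - ∑ j, deriv f (μ j) * μ j := by
      rw [← Finset.sum_sub_distrib]
      apply Finset.sum_congr rfl
      intro j _
      ring
    rw [hexp2]
    linarith
  have heigsum : ∀ (X : Matrix (Fin n) (Fin n) ℂ) (hX : IsDensity X),
      ∑ i, f (hX.1.1.eigenvalues i) ≤ f 1 + ((n : ℝ) - 1) * f 0 :=
    fun X hX => sum_f_le_simplex hconv _ (density_eig_nonneg hX) (density_eig_sum hX)
  have keyB : ∀ Q : Matrix (Fin n) (Fin n) ℂ, IsRankOneProj Q →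
      ∀ (X : Matrix (Fin n) (Fin n) ℂ) (hX : IsDensity X),
      SS X ≤ (∑ i, f (hX.1.1.eigenvalues i)) - (f 1 + ((n : ℝ) - 1) * f 0) + SS Q := by
    intro Q hQ X hX
    apply csSup_le (hSne X)
    rintro y ⟨D, hD, rfl⟩
    exact keyA Q hQ X D hX hD
  -- existence of a rank-one projection
  have hQ0 : ∃ Q₀ : Matrix (Fin n) (Fin n) ℂ, IsRankOneProj Q₀ := by
    have h0n : 0 < n := by omega
    set i₀ : Fin n := ⟨0, h0n⟩
    set Q₀ : Matrix (Fin n) (Fin n) ℂ :=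
      Matrix.diagonal (fun i => if i = i₀ then (1 : ℂ) else 0) with hQ₀def
    have hdens : IsDensity Q₀ := by
      constructor
      · rw [hQ₀def, Matrix.posSemidef_diagonal_iff]
        intro i
        by_cases h : i = i₀ <;> simp [h]
      · rw [hQ₀def, Matrix.trace_diagonal]
        simp
    have hidem : Q₀ * Q₀ = Q₀ := by
      rw [hQ₀def, Matrix.diagonal_mul_diagonal]
      ext i j
      by_cases hij : i = j
      · subst hij
        by_cases h : i = i₀ <;> simp [Matrix.diagonal_apply_eq, h]
      · simp [Matrix.diagonal_apply_ne _ hij]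
    exact ⟨Q₀, rankOne_of_density_idem hdens hidem⟩
  constructor
  · intro hEq
    obtain ⟨Q₀, hQ₀⟩ := hQ0
    have hQ₀d := density_of_rankOne hQ₀
    have h1 : SS Q₀ ≤ sSup (SS '' {X | IsDensity X}) := le_csSup hObdd ⟨Q₀, hQ₀d, rfl⟩
    have h2 := keyB Q₀ hQ₀ P hP
    rw [← hEq] at h1
    have h3 : f 1 + ((n : ℝ) - 1) * f 0 ≤ ∑ i, f (hP.1.1.eigenvalues i) := by linarith
    obtain ⟨i₀, hv1, hv0⟩ := simplex_vertex_of_ge hconv _ (density_eig_nonneg hP)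
      (density_eig_sum hP) h3
    have h01 : ∀ i, hP.1.1.eigenvalues i = 0 ∨ hP.1.1.eigenvalues i = 1 := by
      intro i
      by_cases h : i = i₀
      · right; rw [h]; exact hv1
      · left; exact hv0 i h
    exact rankOne_of_density_idem hP (idem_of_eig01 hP.1.1 h01)
  · intro hR
    apply le_antisymm
    · exact le_csSup hObdd ⟨P, hP, rfl⟩
    · apply csSup_le hOne
      rintro y ⟨X, hX, rfl⟩
      have h1 := keyB P hR X hX
      have h2 := heigsum X hX
      linarith
end

section
/- Let g : [0,∞) → ℝ be strictly monotone increasing, m ≥ 1, and let λ₁ > λ₂ > … > λ_m > 0 and μ₁ > μ₂ > … > μ_m > 0 satisfy Σλ_i = Σμ_i = 1 and g(λ_l) − g(λ_{l+1}) = g(μ_l) − g(μ_{l+1}) for all 1 ≤ l ≤ m−1. Then it is not possible that λ_k > μ_k for some k; i.e., λ_i = μ_i for all i. -/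
open Matrix
open scoped ComplexOrder

/-- two strictly decreasing probability vectors with equal
`g`-increments coincide, for strictly increasing `g`. -/
theorem eq_of_gap_increments (g : ℝ → ℝ) (hg : StrictMonoOn g (Set.Ici 0))
    (m : ℕ) (hm : 1 ≤ m) (lam mu : Fin m → ℝ)
    (hlam_anti : ∀ i j : Fin m, i < j → lam j < lam i)
    (hmu_anti : ∀ i j : Fin m, i < j → mu j < mu i)
    (hlam_pos : ∀ i, 0 < lam i) (hmu_pos : ∀ i, 0 < mu i)
    (hlam_sum : ∑ i, lam i = 1) (hmu_sum : ∑ i, mu i = 1)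
    (hgap : ∀ i : ℕ, ∀ h : i + 1 < m,
      g (lam ⟨i, Nat.lt_of_succ_lt h⟩) - g (lam ⟨i + 1, h⟩) =
        g (mu ⟨i, Nat.lt_of_succ_lt h⟩) - g (mu ⟨i + 1, h⟩)) :
    lam = mu := by
  have h0 : 0 < m := hm
  -- g(lam i) - g(mu i) is constant
  have hconst : ∀ i : Fin m, g (lam i) - g (mu i) = g (lam ⟨0, h0⟩) - g (mu ⟨0, h0⟩) := by
    intro ⟨i, hi⟩
    induction i with
    | zero => rfl
    | succ k ih =>
      have hk : k + 1 < m := hi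
      have := hgap k hk
      have ihk := ih (Nat.lt_of_succ_lt hk)
      linarith
  -- trichotomy on lam 0 vs mu 0
  rcases lt_trichotomy (lam ⟨0, h0⟩) (mu ⟨0, h0⟩) with h | h | h
  · exfalso
    have hgl : g (lam ⟨0, h0⟩) < g (mu ⟨0, h0⟩) :=
      hg (le_of_lt (hlam_pos _)) (le_of_lt (hmu_pos _)) h
    have hall : ∀ i : Fin m, lam i < mu i := by
      intro i
      have hi := hconst i
      have : g (lam i) < g (mu i) := by linarith
      by_contra hle
      push_neg at hle
      exact absurd ((hg.le_iff_le (le_of_lt (hmu_pos i)) (le_of_lt (hlam_pos i))).mpr hle)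
        (not_le.mpr this)
    have : ∑ i, lam i < ∑ i, mu i :=
      Finset.sum_lt_sum_of_nonempty (Finset.univ_nonempty_iff.mpr ⟨⟨0, h0⟩⟩)
        (fun i _ => hall i)
    linarith
  · funext i
    have hi := hconst i
    have : g (lam i) = g (mu i) := by
      have : g (lam ⟨0, h0⟩) = g (mu ⟨0, h0⟩) := by
        have h1 : lam ⟨0, h0⟩ ∈ Set.Ici (0:ℝ) := le_of_lt (hlam_pos _)
        rw [h]
      linarith
    exact hg.injOn (le_of_lt (hlam_pos i)) (le_of_lt (hmu_pos i)) this
  · exfalso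
    have hgl : g (mu ⟨0, h0⟩) < g (lam ⟨0, h0⟩) :=
      hg (le_of_lt (hmu_pos _)) (le_of_lt (hlam_pos _)) h
    have hall : ∀ i : Fin m, mu i < lam i := by
      intro i
      have hi := hconst i
      have : g (mu i) < g (lam i) := by linarith
      by_contra hle
      push_neg at hle
      exact absurd ((hg.le_iff_le (le_of_lt (hlam_pos i)) (le_of_lt (hmu_pos i))).mpr hle)
        (not_le.mpr this)
    have : ∑ i, mu i < ∑ i, lam i :=
      Finset.sum_lt_sum_of_nonempty (Finset.univ_nonempty_iff.mpr ⟨⟨0, h0⟩⟩)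
        (fun i _ => hall i)
    linarith
end
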